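/- Let X be a compact Hausdorff space, σ : X → X a homeomorphism, and n ≥ 1 an integer. Suppose x and y are points of the interior of Per^n(σ) whose orbits O(x) and O(y) are disjoint. Then there exist two disjoint open subsets U₁, U₂ of X contained in the interior of Per^n(σ), each invariant under σ and σ⁻¹ (i.e., σ(Uᵢ) = Uᵢ), with x ∈ U₁ and y ∈ U₂. -/

import Mathlib

/-- `Per^n(σ)` : the set of points `x` with `σ^n(x) = x`, for `n : ℤ`. -/
def perN {X : Type*} [TopologicalSpace X] (σ : X ≃ₜ X) (n : ℤ) : Set X :=
  {x : X | (σ.toEquiv ^ n) x = x}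

/-- The orbit `O(x) = {σ^k(x) : k ∈ ℤ}` of a point `x`. -/
def orbit {X : Type*} [TopologicalSpace X] (σ : X ≃ₜ X) (x : X) : Set X :=
  {y : X | ∃ k : ℤ, (σ.toEquiv ^ k) x = y}

private lemma cont_pow {X : Type*} [TopologicalSpace X] (σ : X ≃ₜ X) :
    ∀ m : ℕ, Continuous ⇑(σ.toEquiv ^ m) := by
  intro m
  induction m with
  | zero => simpa using continuous_id
  | succ m ih =>
    have h : ⇑(σ.toEquiv ^ (m + 1)) = ⇑(σ.toEquiv ^ m) ∘ ⇑σ := by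
      ext z; simp [pow_succ, Equiv.Perm.mul_apply]
    rw [h]; exact ih.comp σ.continuous

private lemma cont_zpow {X : Type*} [TopologicalSpace X] (σ : X ≃ₜ X) (k : ℤ) :
    Continuous ⇑(σ.toEquiv ^ k) := by
  cases k with
  | ofNat m => rw [Int.ofNat_eq_coe, zpow_natCast]; exact cont_pow σ m
  | negSucc m =>
    have h : σ.toEquiv ^ (Int.negSucc m) = σ.symm.toEquiv ^ (m + 1) := by
      rw [zpow_negSucc, ← inv_pow]
      congr 1
    rw [h]; exact cont_pow σ.symm (m + 1)

/-- The `k`-th (integer) power of a homeomorphism, as a homeomorphism. -/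
private def hzpow {X : Type*} [TopologicalSpace X] (σ : X ≃ₜ X) (k : ℤ) : X ≃ₜ X where
  toEquiv := σ.toEquiv ^ k
  continuous_toFun := cont_zpow σ k
  continuous_invFun := by
    show Continuous ⇑(σ.toEquiv ^ k).symm
    have h : (σ.toEquiv ^ k).symm = σ.toEquiv ^ (-k) := by
      rw [zpow_neg, ← Equiv.Perm.inv_def]
    rw [h]; exact cont_zpow σ (-k)

@[simp] private lemma coe_hzpow {X : Type*} [TopologicalSpace X] (σ : X ≃ₜ X) (k : ℤ) :
    ⇑(hzpow σ k) = ⇑(σ.toEquiv ^ k) := rfl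

/-- Let `X` be compact Hausdorff, `σ : X → X` a homeomorphism, `n ≥ 1`, and let `x, y` be
points of the interior of `Per^n(σ)` with disjoint orbits. Then there are disjoint open
subsets `U₁, U₂ ⊆ interior (Per^n(σ))`, each invariant under `σ` and `σ⁻¹`
(i.e. `σ(Uᵢ) = Uᵢ`), with `x ∈ U₁` and `y ∈ U₂`. -/
theorem exists_disjoint_invariant_opens {X : Type*} [TopologicalSpace X] [CompactSpace X]
    [T2Space X] (σ : X ≃ₜ X) (n : ℤ) (hn : 1 ≤ n) (x y : X)
    (hx : x ∈ interior (perN σ n)) (hy : y ∈ interior (perN σ n))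
    (hdisj : Disjoint (orbit σ x) (orbit σ y)) :
    ∃ U₁ U₂ : Set X, IsOpen U₁ ∧ IsOpen U₂ ∧ Disjoint U₁ U₂ ∧
      U₁ ⊆ interior (perN σ n) ∧ U₂ ⊆ interior (perN σ n) ∧
      σ '' U₁ = U₁ ∧ σ '' U₂ = U₂ ∧ x ∈ U₁ ∧ y ∈ U₂ := by
  set P := interior (perN σ n) with hPdef
  -- perN is invariant under all powers
  have hper_inv : ∀ k : ℤ, ∀ z ∈ perN σ n, (σ.toEquiv ^ k) z ∈ perN σ n := by
    intro k z hz
    show (σ.toEquiv ^ n) ((σ.toEquiv ^ k) z) = (σ.toEquiv ^ k) z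
    calc (σ.toEquiv ^ n) ((σ.toEquiv ^ k) z) = (σ.toEquiv ^ (n + k)) z := by
          rw [zpow_add, Equiv.Perm.mul_apply]
      _ = (σ.toEquiv ^ k) ((σ.toEquiv ^ n) z) := by rw [add_comm, zpow_add, Equiv.Perm.mul_apply]
      _ = (σ.toEquiv ^ k) z := by rw [hz]
  have hper_pre : ∀ k : ℤ, (σ.toEquiv ^ k) ⁻¹' perN σ n = perN σ n := by
    intro k
    ext z
    constructor
    · intro hz
      have := hper_inv (-k) _ hz
      simpa [← Equiv.Perm.mul_apply, ← zpow_add] using this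
    · intro hz; exact hper_inv k z hz
  -- the interior P is invariant under all powers
  have hP_pre : ∀ k : ℤ, (σ.toEquiv ^ k) ⁻¹' P = P := by
    intro k
    have := (hzpow σ k).preimage_interior (perN σ n)
    rw [hPdef]
    simpa [hper_pre k] using this
  have hP_fwd : ∀ k : ℤ, ∀ z ∈ P, (σ.toEquiv ^ k) z ∈ P := by
    intro k z hz
    rw [← hP_pre k] at hz; exact hz
  have hn0 : n ≠ 0 := by omega
  -- reduction of powers mod n on perN
  have hmod : ∀ z ∈ perN σ n, ∀ k : ℤ, (σ.toEquiv ^ k) z = (σ.toEquiv ^ (k % n)) z := by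
    intro z hz k
    have hfix : Function.IsFixedPt (⇑(σ.toEquiv ^ (n * (k / n)))) z := by
      rw [zpow_mul]
      exact Function.IsFixedPt.perm_zpow hz (k / n)
    calc (σ.toEquiv ^ k) z = (σ.toEquiv ^ (k % n + n * (k / n))) z := by
          rw [Int.emod_add_mul_ediv k n]
      _ = (σ.toEquiv ^ (k % n)) ((σ.toEquiv ^ (n * (k / n))) z) := by
          rw [zpow_add, Equiv.Perm.mul_apply]
      _ = (σ.toEquiv ^ (k % n)) z := by rw [hfix]
  have hxper : x ∈ perN σ n := interior_subset hx
  have hyper : y ∈ perN σ n := interior_subset hy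
  -- orbits are finite hence compact
  have horb_fin : ∀ z ∈ perN σ n, (orbit σ z).Finite := by
    intro z hz
    apply Set.Finite.subset (Set.Finite.image (fun k => (σ.toEquiv ^ k) z) (Set.finite_Ico (0:ℤ) n))
    rintro w ⟨k, rfl⟩
    refine ⟨k % n, ?_, (hmod z hz k).symm⟩
    exact Set.mem_Ico.mpr ⟨Int.emod_nonneg k hn0, Int.emod_lt_of_pos k (by omega)⟩
  -- separate the two orbits
  obtain ⟨V₁, V₂, hV₁o, hV₂o, hxV, hyV, hVdisj⟩ :=
    SeparatedNhds.of_isCompact_isCompact ((horb_fin x hxper).isCompact)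
      ((horb_fin y hyper).isCompact) hdisj
  -- the invariant open sets
  set S : Set X → Set X := fun V => P ∩ {z | ∀ m : ℤ, (σ.toEquiv ^ m) z ∈ V} with hSdef
  have hSopen : ∀ V : Set X, IsOpen V → IsOpen (S V) := by
    intro V hV
    have hfin : (Set.Ico (0:ℤ) n).Finite := Set.finite_Ico 0 n
    have heq : S V = P ∩ ⋂ k ∈ Set.Ico (0:ℤ) n, (σ.toEquiv ^ k) ⁻¹' V := by
      ext z
      simp only [hSdef, Set.mem_inter_iff, Set.mem_setOf_eq, Set.mem_iInter]
      constructor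
      · rintro ⟨hzP, hall⟩
        exact ⟨hzP, fun k _ => hall k⟩
      · rintro ⟨hzP, hall⟩
        refine ⟨hzP, fun m => ?_⟩
        have hzper : z ∈ perN σ n := interior_subset hzP
        rw [hmod z hzper m]
        exact hall (m % n)
          (Set.mem_Ico.mpr ⟨Int.emod_nonneg m hn0, Int.emod_lt_of_pos m (by omega)⟩)
    rw [heq]
    exact isOpen_interior.inter (hfin.isOpen_biInter (fun k _ => (hV.preimage (cont_zpow σ k))))
  have hSsubV : ∀ V : Set X, S V ⊆ V := by
    intro V z hz
    have := hz.2 0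
    simpa using this
  have hSinv : ∀ V : Set X, σ '' S V = S V := by
    intro V
    have key : ∀ z ∈ S V, σ z ∈ S V ∧ σ.symm z ∈ S V := by
      intro z ⟨hzP, hall⟩
      constructor
      · constructor
        · have := hP_fwd 1 z hzP; simpa using this
        · intro m
          have h1 : (σ.toEquiv ^ m) (σ z) = (σ.toEquiv ^ (m + 1)) z := by
            rw [zpow_add, Equiv.Perm.mul_apply]; simp
          rw [h1]; exact hall (m + 1)
      · constructor
        · have := hP_fwd (-1) z hzP
          simpa [Equiv.Perm.inv_def] using this
        · intro m
          have h1 : (σ.toEquiv ^ m) (σ.symm z) = (σ.toEquiv ^ (m - 1)) z := by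
            rw [sub_eq_add_neg, zpow_add, Equiv.Perm.mul_apply]
            simp [Equiv.Perm.inv_def]
          rw [h1]; exact hall (m - 1)
    apply Set.eq_of_subset_of_subset
    · rintro w ⟨z, hz, rfl⟩; exact (key z hz).1
    · intro z hz
      exact ⟨σ.symm z, (key z hz).2, σ.apply_symm_apply z⟩
  refine ⟨S V₁, S V₂, hSopen V₁ hV₁o, hSopen V₂ hV₂o, ?_, Set.inter_subset_left,
    Set.inter_subset_left, hSinv V₁, hSinv V₂, ?_, ?_⟩
  · exact hVdisj.mono (hSsubV V₁) (hSsubV V₂)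
  · exact ⟨hx, fun m => hxV ⟨m, rfl⟩⟩
  · exact ⟨hy, fun m => hyV ⟨m, rfl⟩⟩
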